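/- For every real α ∈ [0,1], there exist a finite non-bipartite simple graph G = (V,E), a set S ⊆ V such that G∖S is bipartite and the contraction G/S is bipartite, a weight function w : V → ℝ≥0 with w(V) = 2, and a dual certificate y for w with y(E[S]) = α (E[S] the edges inside S), such that w(S) + OPT(G∖S, w) = (1 + α) · OPT(G, w). -/

import Mathlib

open Finset

/-- `C` is a vertex cover of `G`. -/
def IsVC {V : Type*} (G : SimpleGraph V) (C : Finset V) : Prop :=
  ∀ ⦃u v : V⦄, G.Adj u v → u ∈ C ∨ v ∈ C

/-- `OPT G w` : minimum weight of a vertex cover of `G`. -/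
noncomputable def OPT {V : Type*} [Fintype V] (G : SimpleGraph V) (w : V → ℝ) : ℝ :=
  sInf {t : ℝ | ∃ C : Finset V, IsVC G C ∧ t = ∑ v ∈ C, w v}

/-- `LPval G w` : optimal value of the standard vertex cover LP relaxation. -/
noncomputable def LPval {V : Type*} [Fintype V] (G : SimpleGraph V) (w : V → ℝ) : ℝ :=
  sInf {t : ℝ | ∃ x : V → ℝ, (∀ v, 0 ≤ x v) ∧ (∀ ⦃u v : V⦄, G.Adj u v → 1 ≤ x u + x v) ∧
    t = ∑ v, w v * x v}

/-- The graph `G ∖ S` (vertices of `S` kept as isolated vertices). -/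
def Gdel {V : Type*} (G : SimpleGraph V) (S : Set V) : SimpleGraph V :=
  SimpleGraph.fromRel (fun u v => G.Adj u v ∧ u ∉ S ∧ v ∉ S)

open scoped Classical in
/-- Sum of `y` over the set of edges described by `P`. -/
noncomputable def ysum {V : Type*} [Fintype V] [DecidableEq V]
    (y : Sym2 V → ℝ) (P : Sym2 V → Prop) : ℝ :=
  ∑ e : Sym2 V, if P e then y e else 0

/-- `y` is a dual certificate for `w` : a feasible dual solution with `y(δ(v)) = w v`. -/
def IsDualCert {V : Type*} [Fintype V] [DecidableEq V] (G : SimpleGraph V)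
    (w : V → ℝ) (y : Sym2 V → ℝ) : Prop :=
  (∀ e, 0 ≤ y e) ∧ (∀ e, e ∉ G.edgeSet → y e = 0) ∧
    ∀ v : V, ysum y (fun e => e ∈ G.edgeSet ∧ v ∈ e) = w v

/-- Membership in the polytope `Q^W`. -/
def memQW {V : Type*} [Fintype V] [DecidableEq V] (G : SimpleGraph V) (w : V → ℝ) : Prop :=
  (∀ v, 0 ≤ w v) ∧ (∑ v, w v) = 2 ∧ ∃ y : Sym2 V → ℝ, IsDualCert G w y

/-- `G` has odd girth `n` : it contains an odd cycle of length `n` and no shorter one. -/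
def HasOddGirth {V : Type*} (G : SimpleGraph V) (n : ℕ) : Prop :=
  Odd n ∧ (∃ (v : V) (c : G.Walk v v), c.IsCycle ∧ c.length = n) ∧
    ∀ (v : V) (c : G.Walk v v), c.IsCycle → Odd c.length → n ≤ c.length

/-- The contraction `G / S` of the vertex set `S` to a single new vertex `none`. -/
def contract {V : Type*} (G : SimpleGraph V) (S : Set V) :
    SimpleGraph (Option {v : V // v ∉ S}) :=
  SimpleGraph.fromRel (fun x y =>
    match x, y with
    | some u, some v => G.Adj u.1 v.1
    | some u, none => ∃ s ∈ S, G.Adj u.1 s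
    | none, _ => False)

/-- `I` is an independent set of `G`. -/
def IsIndep {V : Type*} (G : SimpleGraph V) (I : Finset V) : Prop :=
  ∀ ⦃u⦄, u ∈ I → ∀ ⦃v⦄, v ∈ I → ¬ G.Adj u v

/-- The fractional chromatic number of `G`. -/
noncomputable def fracChrom {V : Type*} [Fintype V] [DecidableEq V] (G : SimpleGraph V) : ℝ :=
  sInf {t : ℝ | ∃ y : Finset V → ℝ, (∀ I, 0 ≤ y I) ∧ (∀ I, ¬ IsIndep G I → y I = 0) ∧
    (∀ v : V, 1 ≤ ∑ I : Finset V, if v ∈ I then y I else 0) ∧ t = ∑ I : Finset V, y I}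


section AuxConstruction

lemma OPT_eq_of {V : Type*} [Fintype V] (G : SimpleGraph V) (w : V → ℝ) (m : ℝ)
    (C : Finset V) (hC : IsVC G C) (hval : ∑ v ∈ C, w v = m)
    (hlb : ∀ D : Finset V, IsVC G D → m ≤ ∑ v ∈ D, w v) : OPT G w = m := by
  apply le_antisymm
  · exact csInf_le ⟨m, by rintro t ⟨D, hD, rfl⟩; exact hlb D hD⟩ ⟨C, hC, hval.symm⟩
  · exact le_csInf ⟨∑ v ∈ C, w v, C, hC, rfl⟩ (by rintro t ⟨D, hD, rfl⟩; exact hlb D hD)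

def myG : SimpleGraph (Fin 5) := SimpleGraph.fromRel (fun u v =>
  (u = 0 ∧ v = 1) ∨ (u = 0 ∧ v = 2) ∨ (u = 1 ∧ v = 2) ∨ (u = 3 ∧ v = 4))

instance : DecidableRel myG.Adj := fun a b =>
  decidable_of_iff _ (SimpleGraph.fromRel_adj _ a b).symm

def myS : Finset (Fin 5) := {0, 1, 2}

lemma gdel_adj (u v : Fin 5) : (Gdel myG ↑myS).Adj u v ↔
    (u = 3 ∧ v = 4) ∨ (u = 4 ∧ v = 3) := by
  rw [Gdel, SimpleGraph.fromRel_adj]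
  simp only [myG, SimpleGraph.fromRel_adj, myS, Finset.coe_insert, Set.mem_insert_iff,
    Finset.coe_singleton, Set.mem_singleton_iff]
  revert u v
  decide

lemma myG_not_colorable : ¬ myG.Colorable 2 := by
  rintro ⟨c⟩
  have h01 := c.valid (show myG.Adj 0 1 by decide)
  have h02 := c.valid (show myG.Adj 0 2 by decide)
  have h12 := c.valid (show myG.Adj 1 2 by decide)
  have : ∀ a b d : Fin 2, a ≠ b → a ≠ d → b ≠ d → False := by decide
  exact this _ _ _ h01 h02 h12

lemma gdel_colorable : (Gdel myG ↑myS).Colorable 2 := by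
  refine ⟨SimpleGraph.Coloring.mk (fun v => if v = 3 then 0 else 1) ?_⟩
  intro u v h
  rw [gdel_adj] at h
  rcases h with ⟨rfl, rfl⟩ | ⟨rfl, rfl⟩ <;> decide

lemma contract_colorable : (contract myG ↑myS).Colorable 2 := by
  refine ⟨SimpleGraph.Coloring.mk
    (fun x => match x with | some u => if u.1 = 3 then 0 else 1 | none => 0) ?_⟩
  intro x y h
  rw [contract, SimpleGraph.fromRel_adj] at h
  obtain ⟨hne, h⟩ := h
  match x, y with
  | some u, some v =>
    have hu := u.2; have hv := v.2
    simp only [myS, Finset.coe_insert, Set.mem_insert_iff, Finset.coe_singleton,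
      Set.mem_singleton_iff, not_or] at hu hv
    have h' : myG.Adj u.1 v.1 := by
      rcases h with h | h
      · exact h
      · exact h.symm
    rw [myG, SimpleGraph.fromRel_adj] at h'
    obtain ⟨-, h'⟩ := h'
    rcases h' with (⟨h1,h2⟩|⟨h1,h2⟩|⟨h1,h2⟩|⟨h1,h2⟩) | (⟨h1,h2⟩|⟨h1,h2⟩|⟨h1,h2⟩|⟨h1,h2⟩) <;>
      simp_all
  | some u, none =>
    exfalso
    have hu := u.2
    simp only [myS, Finset.coe_insert, Set.mem_insert_iff, Finset.coe_singleton,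
      Set.mem_singleton_iff, not_or] at hu
    rcases h with h | h
    · obtain ⟨s, hs, hadj⟩ := h
      simp only [myS, Finset.coe_insert, Set.mem_insert_iff, Finset.coe_singleton,
        Set.mem_singleton_iff] at hs
      rw [myG, SimpleGraph.fromRel_adj] at hadj
      obtain ⟨-, hadj⟩ := hadj
      rcases hadj with (⟨h1,h2⟩|⟨h1,h2⟩|⟨h1,h2⟩|⟨h1,h2⟩) | (⟨h1,h2⟩|⟨h1,h2⟩|⟨h1,h2⟩|⟨h1,h2⟩) <;>
        rcases hs with hs|hs|hs <;> simp_all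
    · exact h
  | none, some u =>
    exfalso
    have hu := u.2
    simp only [myS, Finset.coe_insert, Set.mem_insert_iff, Finset.coe_singleton,
      Set.mem_singleton_iff, not_or] at hu
    rcases h with h | h
    · exact h
    · obtain ⟨s, hs, hadj⟩ := h
      simp only [myS, Finset.coe_insert, Set.mem_insert_iff, Finset.coe_singleton,
        Set.mem_singleton_iff] at hs
      rw [myG, SimpleGraph.fromRel_adj] at hadj
      obtain ⟨-, hadj⟩ := hadj
      rcases hadj with (⟨h1,h2⟩|⟨h1,h2⟩|⟨h1,h2⟩|⟨h1,h2⟩) | (⟨h1,h2⟩|⟨h1,h2⟩|⟨h1,h2⟩|⟨h1,h2⟩) <;>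
        rcases hs with hs|hs|hs <;> simp_all
  | none, none => exact absurd rfl hne

noncomputable def myw (α : ℝ) : Fin 5 → ℝ := ![α, α, 0, 1-α, 1-α]

noncomputable def myy (α : ℝ) : Sym2 (Fin 5) → ℝ := fun e =>
  (if e = s((0:Fin 5),1) then α else 0) + (if e = s((3:Fin 5),4) then 1-α else 0)

open scoped Classical in
lemma ysum_myy (α : ℝ) (P : Sym2 (Fin 5) → Prop) :
    ysum (myy α) P = (if P s((0:Fin 5),1) then α else 0)
      + (if P s((3:Fin 5),4) then 1-α else 0) := by
  unfold ysum myy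
  rw [Finset.sum_congr rfl (fun e _ => show (if P e then _ else (0:ℝ)) =
    (if e = s((0:Fin 5),1) then (if P e then α else 0) else 0)
      + (if e = s((3:Fin 5),4) then (if P e then 1-α else 0) else 0) from by
      by_cases h : P e <;> by_cases h2 : e = s((0:Fin 5),1) <;>
        by_cases h3 : e = s((3:Fin 5),4) <;> simp_all),
    Finset.sum_add_distrib,
    Finset.sum_ite_eq' univ (s((0:Fin 5),1)) (fun e => if P e then α else 0),
    Finset.sum_ite_eq' univ (s((3:Fin 5),4)) (fun e => if P e then 1-α else 0)]
  simp

lemma edge01 : s((0:Fin 5),1) ∈ myG.edgeSet := by rw [SimpleGraph.mem_edgeSet]; decide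
lemma edge34 : s((3:Fin 5),4) ∈ myG.edgeSet := by rw [SimpleGraph.mem_edgeSet]; decide

lemma dualcert (α : ℝ) (h0 : 0 ≤ α) (h1 : α ≤ 1) : IsDualCert myG (myw α) (myy α) := by
  refine ⟨fun e => ?_, fun e he => ?_, fun v => ?_⟩
  · refine add_nonneg ?_ ?_ <;> split <;> linarith
  · unfold myy
    rw [if_neg, if_neg, add_zero]
    · rintro rfl; exact he edge34
    · rintro rfl; exact he edge01
  · have adj01 : myG.Adj 0 1 := by decide
    have adj34 : myG.Adj 3 4 := by decide
    rw [ysum_myy]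
    fin_cases v <;>
      simp +decide [adj01, adj34, edge01, edge34, myw, Sym2.mem_iff]

lemma myw_nonneg (α : ℝ) (h0 : 0 ≤ α) (h1 : α ≤ 1) : ∀ v, 0 ≤ myw α v := by
  intro v; fin_cases v <;> simp [myw] <;> linarith

lemma sum_le_D (α : ℝ) (h0 : 0 ≤ α) (h1 : α ≤ 1) (D : Finset (Fin 5)) (a b : Fin 5)
    (ha : a ∈ D) (hb : b ∈ D) (hne : a ≠ b) (hsum : myw α a + myw α b = 1) :
    1 ≤ ∑ v ∈ D, myw α v := by
  calc 1 = ∑ v ∈ ({a, b} : Finset (Fin 5)), myw α v := by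
        rw [Finset.sum_pair hne]; exact hsum.symm
    _ ≤ ∑ v ∈ D, myw α v := Finset.sum_le_sum_of_subset_of_nonneg
        (by intro x hx; rcases Finset.mem_insert.mp hx with rfl | hx
            · exact ha
            · exact (Finset.mem_singleton.mp hx) ▸ hb)
        (fun v _ _ => myw_nonneg α h0 h1 v)

lemma opt_G (α : ℝ) (h0 : 0 ≤ α) (h1 : α ≤ 1) : OPT myG (myw α) = 1 := by
  apply OPT_eq_of myG (myw α) 1 {0, 2, 3}
  · intro u v h; revert h; revert u v; decide
  · simp [myw, Finset.sum_insert, Finset.mem_insert]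
  · intro D hD
    have h1' := hD (show myG.Adj 0 1 by decide)
    have h2' := hD (show myG.Adj 3 4 by decide)
    have w0 : myw α 0 = α := by simp [myw]
    have w1 : myw α 1 = α := by simp [myw]
    have w3 : myw α 3 = 1 - α := by simp [myw]
    have w4 : myw α 4 = 1 - α := by simp [myw]
    rcases h1' with ha | ha <;> rcases h2' with hb | hb
    · exact sum_le_D α h0 h1 D 0 3 ha hb (by decide) (by rw [w0, w3]; ring)
    · exact sum_le_D α h0 h1 D 0 4 ha hb (by decide) (by rw [w0, w4]; ring)
    · exact sum_le_D α h0 h1 D 1 3 ha hb (by decide) (by rw [w1, w3]; ring)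
    · exact sum_le_D α h0 h1 D 1 4 ha hb (by decide) (by rw [w1, w4]; ring)

lemma opt_Gdel (α : ℝ) (h0 : 0 ≤ α) (h1 : α ≤ 1) : OPT (Gdel myG ↑myS) (myw α) = 1 - α := by
  apply OPT_eq_of _ (myw α) (1 - α) {3}
  · intro u v h
    rw [gdel_adj] at h
    rcases h with ⟨rfl, rfl⟩ | ⟨rfl, rfl⟩ <;> simp
  · simp [myw]
  · intro D hD
    have h' := hD ((gdel_adj 3 4).mpr (Or.inl ⟨rfl, rfl⟩))
    have key : ∀ b : Fin 5, b ∈ D → myw α b = 1 - α → 1 - α ≤ ∑ v ∈ D, myw α v := by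
      intro b hb hw
      calc 1 - α = ∑ v ∈ ({b} : Finset (Fin 5)), myw α v := by simp [hw]
        _ ≤ ∑ v ∈ D, myw α v := Finset.sum_le_sum_of_subset_of_nonneg
            (Finset.singleton_subset_iff.mpr hb) (fun v _ _ => myw_nonneg α h0 h1 v)
    rcases h' with hb | hb
    · exact key 3 hb (by simp [myw])
    · exact key 4 hb (by simp [myw])

end AuxConstruction

/-- for every `α ∈ [0,1]` the bound `1 + α` is attained by some
non-bipartite graph with a bipartizing set whose contraction is bipartite. -/
theorem round_bipartize_bipartite_contraction_tight (α : ℝ) (h0 : 0 ≤ α) (h1 : α ≤ 1) :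
    ∃ (n : ℕ) (G : SimpleGraph (Fin n)) (S : Finset (Fin n))
      (w : Fin n → ℝ) (y : Sym2 (Fin n) → ℝ),
      (¬ G.Colorable 2) ∧ (Gdel G ↑S).Colorable 2 ∧ (contract G ↑S).Colorable 2 ∧
      (∀ v, 0 ≤ w v) ∧ (∑ v, w v) = 2 ∧ IsDualCert G w y ∧
      ysum y (fun e => e ∈ G.edgeSet ∧ ∃ p ∈ S, ∃ q ∈ S, e = s(p, q)) = α ∧
      ∑ v ∈ S, w v + OPT (Gdel G ↑S) w = (1 + α) * OPT G w := by
  refine ⟨5, myG, myS, myw α, myy α, myG_not_colorable, gdel_colorable, contract_colorable,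
    myw_nonneg α h0 h1, ?_, dualcert α h0 h1, ?_, ?_⟩
  · rw [Fin.sum_univ_five]; simp [myw]; ring
  · rw [ysum_myy]
    rw [if_pos ⟨edge01, 0, by decide, 1, by decide, rfl⟩, if_neg, add_zero]
    rintro ⟨-, p, hp, q, hq, he⟩
    revert he; revert hq; revert hp; revert q; revert p
    decide
  · rw [opt_G α h0 h1, opt_Gdel α h0 h1]
    have : ∑ v ∈ myS, myw α v = 2 * α := by
      simp [myS, myw, Finset.sum_insert, Finset.mem_insert]; ring
    rw [this]; ring
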